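/- Let I be an ideal of MvPolynomial (Fin n) ℂ such that the quotient ℂ-algebra MvPolynomial (Fin n) ℂ / I is finite-dimensional over ℂ. Then there exists a finite family of monomials whose residues modulo I form a ℂ-basis of the quotient (i.e. the quotient admits a monomial basis). -/

import Mathlib

open MvPolynomial

/-- If the quotient of `MvPolynomial (Fin n) ℂ` by an ideal `I` is finite-dimensional
over `ℂ`, then the quotient admits a monomial basis: there are finitely many monomials
whose residues modulo `I` form a `ℂ`-basis of the quotient. -/
theorem exists_monomial_basis {n : ℕ} (I : Ideal (MvPolynomial (Fin n) ℂ))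
    (hfd : FiniteDimensional ℂ (MvPolynomial (Fin n) ℂ ⧸ I)) :
    ∃ (μ : ℕ) (p : Fin μ → MvPolynomial (Fin n) ℂ),
      (∀ i, ∃ d : Fin n →₀ ℕ, p i = monomial d 1) ∧
      ∃ b : Module.Basis (Fin μ) ℂ (MvPolynomial (Fin n) ℂ ⧸ I),
        ∀ i, b i = Ideal.Quotient.mk I (p i) := by
  classical
  set L : MvPolynomial (Fin n) ℂ →ₗ[ℂ] MvPolynomial (Fin n) ℂ ⧸ I :=
    (Ideal.Quotient.mkₐ ℂ I).toLinearMap with hL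
  set f : (Fin n →₀ ℕ) → (MvPolynomial (Fin n) ℂ ⧸ I) :=
    fun d => Ideal.Quotient.mk I (monomial d 1) with hf
  have hrange : Set.range f = L '' Set.range (fun d : Fin n →₀ ℕ =>
      (monomial d 1 : MvPolynomial (Fin n) ℂ)) := by
    rw [← Set.range_comp]; rfl
  have hspanP : Submodule.span ℂ (Set.range fun d : Fin n →₀ ℕ =>
      (monomial d 1 : MvPolynomial (Fin n) ℂ)) = ⊤ := by
    have := (MvPolynomial.basisMonomials (Fin n) ℂ).span_eq
    rwa [MvPolynomial.coe_basisMonomials] at this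
  have hsurj : Function.Surjective L := Ideal.Quotient.mk_surjective
  have hspan : Submodule.span ℂ (Set.range f) = ⊤ := by
    rw [hrange, Submodule.span_image, hspanP, Submodule.map_top,
      LinearMap.range_eq_top.2 hsurj]
  obtain ⟨s, hs_sub, hs_span, hs_li⟩ := exists_linearIndependent ℂ (Set.range f)
  rw [hspan] at hs_span
  have hB : Module.Basis s ℂ (MvPolynomial (Fin n) ℂ ⧸ I) :=
    Module.Basis.mk hs_li (by rw [Subtype.range_coe, hs_span])
  haveI : Fintype s := FiniteDimensional.fintypeBasisIndex hB
  refine ⟨Fintype.card s,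
    fun i => monomial (hs_sub ((Fintype.equivFin s).symm i).2).choose 1,
    fun i => ⟨_, rfl⟩,
    (Module.Basis.mk hs_li (by rw [Subtype.range_coe, hs_span])).reindex (Fintype.equivFin s),
    fun i => ?_⟩
  simp only [Module.Basis.reindex_apply, Module.Basis.mk_apply]
  exact ((hs_sub ((Fintype.equivFin s).symm i).2).choose_spec).symm
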